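/- Let k ≥ 16 be an integer and n an integer with n ≥ k⁴. Then there exists an (n, k, 1/√k)-bisector of size at most 6·k·(k+1)·e^{√k}·ln k. -/

import Mathlib

open Finset

/-- An `(n,k,α)`-bisector: every function maps exactly `⌈α·n⌉` elements to `1`,
and every `k`-subset of `[n]` is mapped entirely to `0` by some function. -/
def IsBisector (n k : ℕ) (α : ℝ) (F : Finset (Fin n → Fin 2)) : Prop :=
  (∀ f ∈ F, (Finset.univ.filter fun x => f x = 1).card = ⌈α * (n : ℝ)⌉₊) ∧
  ∀ S : Finset (Fin n), S.card = k → ∃ f ∈ F, ∀ x ∈ S, f x = 0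



lemma choose_ratio_h (d : ℕ) : ∀ (s b : ℕ), s + d ≤ b →
    (b.choose s : ℝ) * ((b:ℝ) - s - d)^s ≤ ((b - d).choose s : ℝ) * ((b:ℝ) - s)^s := by
  intro s
  induction s with
  | zero => intro b h; simp
  | succ s ih =>
    intro b h
    have hIH := ih b (by omega)
    set B : ℝ := (b : ℝ) with hB
    have hBb : ((s:ℝ) + 1 + d) ≤ B := by
      have : ((s+1+d:ℕ):ℝ) ≤ ((b:ℕ):ℝ) := Nat.cast_le.mpr h
      push_cast at this; linarith
    have hc1 : ((b - s : ℕ) : ℝ) = B - s := by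
      rw [Nat.cast_sub (by omega : s ≤ b)]
    have hc2 : ((b - d - s : ℕ) : ℝ) = B - d - s := by
      rw [Nat.cast_sub (by omega : s ≤ b - d), Nat.cast_sub (by omega : d ≤ b)]
    have h1 : (b.choose (s+1) : ℝ) * ((s:ℝ)+1) = (b.choose s : ℝ) * (B - s) := by
      calc (b.choose (s+1) : ℝ) * ((s:ℝ)+1) = ((b.choose (s+1) * (s+1) : ℕ) : ℝ) := by push_cast; ring
        _ = ((b.choose s * (b - s) : ℕ) : ℝ) := by rw [Nat.choose_succ_right_eq]
        _ = (b.choose s : ℝ) * (B - s) := by push_cast [hc1]; ring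
    have h2 : ((b-d).choose (s+1) : ℝ) * ((s:ℝ)+1) = ((b-d).choose s : ℝ) * (B - d - s) := by
      calc ((b-d).choose (s+1) : ℝ) * ((s:ℝ)+1) = (((b-d).choose (s+1) * (s+1) : ℕ) : ℝ) := by push_cast; ring
        _ = (((b-d).choose s * (b - d - s) : ℕ) : ℝ) := by rw [Nat.choose_succ_right_eq]
        _ = ((b-d).choose s : ℝ) * (B - d - s) := by push_cast [hc2]; ring
    have hEpos : (0:ℝ) < (B - s - d)^s := by
      apply pow_pos; nlinarith
    have hnn1 : (0:ℝ) ≤ B - s := by nlinarith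
    have hnn2 : (0:ℝ) ≤ B - s - 1 - d := by nlinarith
    have G : (b.choose s : ℝ) * (B - s) * (B - (s+1) - d)^(s+1)
        ≤ ((b-d).choose s : ℝ) * (B - d - s) * (B - (s+1))^(s+1) := by
      apply le_of_mul_le_mul_right _ hEpos
      calc (b.choose s : ℝ) * (B - s) * (B - (s+1) - d)^(s+1) * (B - s - d)^s
          = ((b.choose s : ℝ) * (B - s - d)^s) * ((B - s) * (B - (s+1) - d)^(s+1)) := by ring
        _ ≤ (((b-d).choose s : ℝ) * (B - s)^s) * ((B - s) * (B - (s+1) - d)^(s+1)) := by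
            apply mul_le_mul_of_nonneg_right hIH
            have : (0:ℝ) ≤ (B - (s+1) - d)^(s+1) := by
              apply pow_nonneg; nlinarith
            positivity
        _ = ((b-d).choose s : ℝ) * ((B - s) * (B - (s+1) - d))^(s+1) := by
            rw [mul_pow]; ring
        _ ≤ ((b-d).choose s : ℝ) * ((B - s - d) * (B - (s+1)))^(s+1) := by
            apply mul_le_mul_of_nonneg_left _ (by positivity)
            apply pow_le_pow_left₀ (by nlinarith) (by nlinarith) _
        _ = ((b-d).choose s : ℝ) * (B - d - s) * (B - (s+1))^(s+1) * (B - s - d)^s := by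
            rw [mul_pow]; ring
    have hpos : (0:ℝ) < (s:ℝ) + 1 := by positivity
    have final : (b.choose (s+1) : ℝ) * (B - ((s:ℕ)+1:ℕ) - d)^(s+1) * ((s:ℝ)+1)
        ≤ ((b-d).choose (s+1) : ℝ) * (B - ((s:ℕ)+1:ℕ))^(s+1) * ((s:ℝ)+1) := by
      push_cast
      calc (b.choose (s+1) : ℝ) * (B - ((s:ℝ)+1) - d)^(s+1) * ((s:ℝ)+1)
          = ((b.choose (s+1) : ℝ) * ((s:ℝ)+1)) * (B - ((s:ℝ)+1) - d)^(s+1) := by ring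
        _ = ((b.choose s : ℝ) * (B - s)) * (B - ((s:ℝ)+1) - d)^(s+1) := by rw [h1]
        _ ≤ (((b-d).choose s : ℝ) * (B - d - s)) * (B - ((s:ℝ)+1))^(s+1) := by
            have := G; push_cast at this; linarith [this]
        _ = (((b-d).choose (s+1) : ℝ) * ((s:ℝ)+1)) * (B - ((s:ℝ)+1))^(s+1) := by rw [h2]
        _ = ((b-d).choose (s+1) : ℝ) * (B - ((s:ℝ)+1))^(s+1) * ((s:ℝ)+1) := by ring
    have := le_of_mul_le_mul_right (by push_cast at final ⊢; exact final) hpos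
    push_cast at this ⊢
    exact this


lemma exp_three_le : Real.exp 3 ≤ 21 := by
  have h1 := Real.exp_one_lt_d9
  have h3 : Real.exp 3 = (Real.exp 1)^(3:ℕ) := by
    rw [← Real.exp_nat_mul]; norm_num
  have := pow_lt_pow_left₀ h1 (Real.exp_pos 1).le (three_ne_zero)
  rw [h3]; nlinarith

lemma q0_le_ratio (k s t : ℕ) (u : ℝ) (hu4 : 4 ≤ u) (hu2 : u^2 = (k:ℝ))
    (htR : (t:ℝ) = u^4) (hsR : (s:ℝ) ≤ u^3+2) (hstk : s + k ≤ t) :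
    (t.choose s : ℝ) * ((2*((k:ℝ)+1) * Real.exp u)⁻¹) ≤ ((t - k).choose s : ℝ) := by
  have hupos : (0:ℝ) < u := by linarith
  have hkR : (16:ℝ) ≤ (k:ℝ) := by nlinarith
  have hXpos : (0:ℝ) < (t:ℝ) - s := by rw [htR]; nlinarith
  have hYpos : (0:ℝ) < (t:ℝ) - s - k := by rw [htR, ← hu2]; nlinarith
  have hA := choose_ratio_h k s t hstk
  set X := (t:ℝ) - s with hX
  set Y := (t:ℝ) - s - k with hY
  have hXs : (0:ℝ) < X^s := pow_pos hXpos s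
  have hstep1 : (t.choose s : ℝ) * (Y/X)^s ≤ ((t-k).choose s : ℝ) := by
    rw [div_pow, ← mul_div_assoc, div_le_iff₀ hXs]
    exact hA
  have hlog : -((k:ℝ)/Y) ≤ Real.log (Y/X) := by
    have h1 : Real.log (X/Y) ≤ X/Y - 1 := Real.log_le_sub_one_of_pos (by positivity)
    have h2 : Real.log (Y/X) = - Real.log (X/Y) := by
      rw [← Real.log_inv]
      congr 1
      field_simp
    have h3 : X/Y - 1 = (k:ℝ)/Y := by field_simp [hX, hY]; linarith
    rw [h2]; rw [h3] at h1; linarith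
  have hsk : (s:ℝ) * ((k:ℝ)/Y) ≤ u + 3 := by
    rw [← mul_div_assoc, div_le_iff₀ hYpos]
    have hYlb : u^4 - u^3 - u^2 - 2 ≤ Y := by rw [hY, htR, ← hu2]; nlinarith
    nlinarith [hsR, hu4, hYlb]
  have hpow : (2*((k:ℝ)+1) * Real.exp u)⁻¹ ≤ (Y/X)^s := by
    have hYX : 0 < Y/X := by positivity
    have h1 : (Y/X)^s = Real.exp ((s:ℝ) * Real.log (Y/X)) := by
      rw [← Real.log_pow, Real.exp_log (pow_pos hYX s)]
    have h2 : -(u+3) ≤ (s:ℝ) * Real.log (Y/X) := by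
      have h2a : (s:ℝ) * (-((k:ℝ)/Y)) ≤ (s:ℝ) * Real.log (Y/X) :=
        mul_le_mul_of_nonneg_left hlog (Nat.cast_nonneg s)
      nlinarith
    calc (2*((k:ℝ)+1) * Real.exp u)⁻¹ ≤ Real.exp (-(u+3)) := by
          rw [Real.exp_neg, Real.exp_add]
          apply inv_anti₀ (by positivity)
          nlinarith [Real.exp_pos u, exp_three_le]
      _ ≤ Real.exp ((s:ℝ) * Real.log (Y/X)) := Real.exp_le_exp.mpr (by linarith)
      _ = (Y/X)^s := h1.symm
  calc (t.choose s:ℝ) * (2*((k:ℝ)+1) * Real.exp u)⁻¹ ≤ (t.choose s:ℝ) * (Y/X)^s :=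
      mul_le_mul_of_nonneg_left hpow (Nat.cast_nonneg _)
    _ ≤ _ := hstep1

lemma N_bounds (K L E : ℝ) (hK : 16 ≤ K) (hL2 : 2 ≤ L) (hE1 : 1 ≤ E) :
    2*K*L + 1 ≤ (⌈(2*K*L + 1) * (2*(K+1)*E)⌉₊ : ℝ) * (2*(K+1)*E)⁻¹ ∧
    (⌈(2*K*L + 1) * (2*(K+1)*E)⌉₊ : ℝ) ≤ 6*K*(K+1)*E*L := by
  have hpos : (0:ℝ) < 2*(K+1)*E := by nlinarith
  have hApos : (0:ℝ) ≤ (2*K*L + 1) * (2*(K+1)*E) := by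
    have h0 : (0:ℝ) ≤ 2*K*L+1 := by nlinarith
    exact mul_nonneg h0 hpos.le
  have hNA := Nat.le_ceil ((2*K*L + 1) * (2*(K+1)*E))
  have hNup := Nat.ceil_lt_add_one hApos
  constructor
  · calc 2*K*L+1 = ((2*K*L+1)*(2*(K+1)*E)) * (2*(K+1)*E)⁻¹ := by field_simp
      _ ≤ (⌈(2*K*L + 1) * (2*(K+1)*E)⌉₊ : ℝ) * (2*(K+1)*E)⁻¹ :=
        mul_le_mul_of_nonneg_right hNA (by positivity)
  · have hKE : (17:ℝ) ≤ (K+1)*E := by nlinarith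
    have hKL : (32:ℝ) ≤ K*L := by nlinarith
    have key : 2*(K+1)*E + 1 ≤ 2*K*(K+1)*E*L := by
      nlinarith [mul_nonneg (sub_nonneg.2 hKL) (show (0:ℝ) ≤ (K+1)*E by nlinarith), hKE]
    nlinarith

lemma count_lt (k t s N : ℕ) (q0 L : ℝ) (hq0pos : 0 < q0) (hq0le : q0 ≤ 1)
    (hq : (t.choose s:ℝ) * q0 ≤ ((t-k).choose s:ℝ))
    (hstk : s + k ≤ t)
    (htk : (t.choose k:ℝ) ≤ Real.exp (2*(k:ℝ)*L))
    (hNq0 : 2*(k:ℝ)*L + 1 ≤ (N:ℝ)*q0) :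
    t.choose k * (t.choose s - (t-k).choose s)^N < (t.choose s)^N := by
  have hGle : (t-k).choose s ≤ t.choose s := Nat.choose_le_choose s (Nat.sub_le t k)
  have hCpos : 0 < t.choose s := Nat.choose_pos (by omega)
  have hCposR : (0:ℝ) < (t.choose s:ℝ) := by exact_mod_cast hCpos
  have hDle : ((t.choose s - (t-k).choose s : ℕ):ℝ) ≤ (t.choose s:ℝ) * (1 - q0) := by
    rw [Nat.cast_sub hGle]; nlinarith [hq]
  have hDnn : (0:ℝ) ≤ ((t.choose s - (t-k).choose s : ℕ):ℝ) := Nat.cast_nonneg _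
  have hreal : (t.choose k : ℝ) * (((t.choose s - (t-k).choose s : ℕ)):ℝ)^N < ((t.choose s):ℝ)^N := by
    have hstep2 : (1 - q0)^N ≤ Real.exp (-q0)^N :=
      pow_le_pow_left₀ (by nlinarith) (by nlinarith [Real.add_one_le_exp (-q0)]) N
    calc (t.choose k : ℝ) * (((t.choose s - (t-k).choose s : ℕ)):ℝ)^N
        ≤ Real.exp (2*(k:ℝ)*L) * ((t.choose s:ℝ) * (1 - q0))^N :=
          mul_le_mul htk (pow_le_pow_left₀ hDnn hDle N) (pow_nonneg hDnn N) (Real.exp_pos _).le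
      _ = Real.exp (2*(k:ℝ)*L) * (1 - q0)^N * (t.choose s:ℝ)^N := by rw [mul_pow]; ring
      _ ≤ Real.exp (2*(k:ℝ)*L) * Real.exp (-q0)^N * (t.choose s:ℝ)^N := by
          have h5 : Real.exp (2*(k:ℝ)*L) * (1 - q0)^N ≤ Real.exp (2*(k:ℝ)*L) * Real.exp (-q0)^N :=
            mul_le_mul_of_nonneg_left hstep2 (Real.exp_pos _).le
          exact mul_le_mul_of_nonneg_right h5 (pow_nonneg hCposR.le N)
      _ = Real.exp (2*(k:ℝ)*L + (N:ℝ)*(-q0)) * (t.choose s:ℝ)^N := by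
          rw [← Real.exp_nat_mul, ← Real.exp_add]
      _ < 1 * (t.choose s:ℝ)^N := by
          apply mul_lt_mul_of_pos_right _ (pow_pos hCposR N)
          rw [show (1:ℝ) = Real.exp 0 from (Real.exp_zero).symm]
          apply Real.exp_lt_exp.mpr
          nlinarith [hNq0]
      _ = (t.choose s:ℝ)^N := one_mul _
  have hcast : ((t.choose k * (t.choose s - (t-k).choose s)^N : ℕ):ℝ) < (((t.choose s)^N : ℕ):ℝ) := by
    push_cast
    convert hreal using 3 <;> push_cast <;> ring
  exact_mod_cast hcast


lemma exists_good_tuple (t s k N : ℕ)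
    (hcount : t.choose k * (t.choose s - (t-k).choose s)^N < (t.choose s)^N) :
    ∃ g : Fin N → Finset (Fin t), (∀ i, (g i).card = s) ∧
      ∀ T ∈ powersetCard k (univ : Finset (Fin t)), ∃ i, Disjoint (g i) T := by
  classical
  set 𝒮 := powersetCard s (univ : Finset (Fin t)) with h𝒮
  set Ω := Fintype.piFinset (fun _ : Fin N => 𝒮) with hΩ
  have hΩcard : Ω.card = (t.choose s)^N := by
    rw [hΩ, Fintype.card_piFinset]
    simp [h𝒮, card_powersetCard]
  have hbadT : ∀ T ∈ powersetCard k (univ : Finset (Fin t)),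
      (𝒮.filter (fun A => ¬ Disjoint A T)).card = t.choose s - (t-k).choose s := by
    intro T hT
    rw [mem_powersetCard] at hT
    have hgood : 𝒮.filter (fun A => Disjoint A T) = powersetCard s (univ \ T) := by
      ext A
      simp only [mem_filter, h𝒮, mem_powersetCard, subset_sdiff]
      tauto
    have hgc : (𝒮.filter (fun A => Disjoint A T)).card = (t-k).choose s := by
      rw [hgood, card_powersetCard, card_sdiff_of_subset (subset_univ T), card_univ, Fintype.card_fin, hT.2]
    have hsplit := card_filter_add_card_filter_not (s := 𝒮) (fun A => Disjoint A T)
    have h𝒮card : 𝒮.card = t.choose s := by simp [h𝒮, card_powersetCard]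
    omega
  have hsub : Ω.filter (fun g => ∃ T ∈ powersetCard k (univ : Finset (Fin t)), ∀ i, ¬ Disjoint (g i) T)
      ⊆ (powersetCard k (univ : Finset (Fin t))).biUnion
        (fun T => Fintype.piFinset (fun _ : Fin N => 𝒮.filter (fun A => ¬ Disjoint A T))) := by
    intro g hg
    rw [mem_filter] at hg
    obtain ⟨hgΩ, T, hT, hbad⟩ := hg
    rw [mem_biUnion]
    exact ⟨T, hT, Fintype.mem_piFinset.mpr fun i =>
      mem_filter.mpr ⟨Fintype.mem_piFinset.mp hgΩ i, hbad i⟩⟩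
  have hcard : (Ω.filter (fun g => ∃ T ∈ powersetCard k (univ : Finset (Fin t)),
      ∀ i, ¬ Disjoint (g i) T)).card < Ω.card := by
    calc _ ≤ ((powersetCard k (univ : Finset (Fin t))).biUnion
          (fun T => Fintype.piFinset (fun _ : Fin N => 𝒮.filter (fun A => ¬ Disjoint A T)))).card :=
        card_le_card hsub
      _ ≤ ∑ T ∈ powersetCard k (univ : Finset (Fin t)),
          (Fintype.piFinset (fun _ : Fin N => 𝒮.filter (fun A => ¬ Disjoint A T))).card :=
        card_biUnion_le
      _ ≤ ∑ T ∈ powersetCard k (univ : Finset (Fin t)), (t.choose s - (t-k).choose s)^N := by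
        apply sum_le_sum
        intro T hT
        rw [Fintype.card_piFinset]
        simp [hbadT T hT]
      _ = t.choose k * (t.choose s - (t-k).choose s)^N := by
        rw [sum_const, card_powersetCard, card_univ, Fintype.card_fin, smul_eq_mul]
      _ < (t.choose s)^N := hcount
      _ = Ω.card := hΩcard.symm
  have hne : (Ω.filter (fun g => ¬ ∃ T ∈ powersetCard k (univ : Finset (Fin t)),
      ∀ i, ¬ Disjoint (g i) T)).Nonempty := by
    refine card_pos.mp ?_
    have hspl := card_filter_add_card_filter_not (s := Ω)
      (fun g => ∃ T ∈ powersetCard k (univ : Finset (Fin t)), ∀ i, ¬ Disjoint (g i) T)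
    revert hspl hcard
    generalize (Ω.filter (fun g => ∃ T ∈ powersetCard k (univ : Finset (Fin t)),
      ∀ i, ¬ Disjoint (g i) T)).card = x
    generalize (Ω.filter (fun g => ¬ ∃ T ∈ powersetCard k (univ : Finset (Fin t)),
      ∀ i, ¬ Disjoint (g i) T)).card = y
    generalize Ω.card = z
    omega
  obtain ⟨g, hg⟩ := hne
  rw [mem_filter] at hg
  obtain ⟨hgΩ, hnp⟩ := hg
  push_neg at hnp
  refine ⟨g, fun i => ?_, fun T hT => hnp T hT⟩
  have := Fintype.mem_piFinset.mp hgΩ i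
  rw [h𝒮, mem_powersetCard] at this
  exact this.2

set_option maxHeartbeats 1000000 in
/-- For `k ≥ 16` and `n ≥ k⁴` there is an `(n,k,1/√k)`-bisector of size at most
`6·k·(k+1)·e^{√k}·ln k`. -/
theorem bisector_sqrt_k (k n : ℕ) (hk : 16 ≤ k) (hn : k ^ 4 ≤ n) :
    ∃ F : Finset (Fin n → Fin 2),
      IsBisector n k (1 / Real.sqrt k) F ∧
        (F.card : ℝ) ≤
          6 * (k : ℝ) * ((k : ℝ) + 1) * Real.exp (Real.sqrt k) * Real.log k := by
  classical
  have hkpos : 0 < k := by omega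
  have hkR : (16:ℝ) ≤ (k:ℝ) := by exact_mod_cast hk
  set u : ℝ := Real.sqrt k with hu_def
  have hu2 : u^2 = k := Real.sq_sqrt (by positivity)
  have hu4 : (4:ℝ) ≤ u := by nlinarith [Real.sqrt_nonneg (k:ℝ)]
  have hupos : (0:ℝ) < u := by linarith
  -- parameters
  set t := k^2 with ht
  set b := n / t with hb
  set m := ⌈1 / Real.sqrt k * (n : ℝ)⌉₊ with hm
  set s := m / b + 1 with hs
  clear_value s
  clear_value m
  clear_value b
  clear_value t
  have htpos : 0 < t := by rw [ht]; positivity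
  have htn : t ≤ n := by
    calc t = k^2 := ht
      _ ≤ k^4 := Nat.pow_le_pow_right hkpos (by norm_num)
      _ ≤ n := hn
  have hbpos : 1 ≤ b := by rw [hb]; exact (Nat.one_le_div_iff htpos).mpr htn
  have htR : (t:ℝ) = u^4 := by
    rw [ht]; push_cast; rw [← hu2]; ring
  have hnR : (u:ℝ)^8 ≤ (n:ℝ) := by
    have h1 : ((k^4 : ℕ):ℝ) ≤ (n:ℝ) := by exact_mod_cast hn
    push_cast at h1
    have h2 : ((k:ℝ))^4 = u^8 := by rw [← hu2]; ring
    linarith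
  -- basic real facts
  have hbR : (n:ℝ) + 1 ≤ u^4 * b + u^4 := by
    have h1 : t * b + n % t = n := by rw [hb]; exact Nat.div_add_mod n t
    have h2 := Nat.mod_lt n htpos
    have : n + 1 ≤ t * b + t := by omega
    have h3 : ((n:ℝ)) + 1 ≤ (t:ℝ) * b + t := by exact_mod_cast this
    rw [htR] at h3; linarith
  have hbR1 : (1:ℝ) ≤ (b:ℝ) := by exact_mod_cast hbpos
  have hb4 : u^4 - 1 ≤ (b:ℝ) := by nlinarith
  have hmR : u * m ≤ (n:ℝ) + u := by
    have h1 : (m:ℝ) < 1 / Real.sqrt k * (n : ℝ) + 1 := by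
      rw [hm]
      exact Nat.ceil_lt_add_one (by positivity)
    have h2 : 1 / Real.sqrt k * (n:ℝ) = (n:ℝ)/u := by rw [← hu_def]; ring
    rw [h2] at h1
    have h3 : u * (m:ℝ) < u * ((n:ℝ)/u + 1) := by
      exact (mul_lt_mul_iff_right₀ hupos).mpr h1
    have h4 : u * ((n:ℝ)/u + 1) = (n:ℝ) + u := by field_simp
    linarith
  have hmb : (m:ℝ) ≤ (u^3 + 1) * b := by
    have key : (n:ℝ) + u ≤ (u^4 + u) * b := by
      nlinarith [mul_le_mul_of_nonneg_left hb4 hupos.le]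
    have : u * m ≤ u * ((u^3+1)*b) := by
      calc u * m ≤ (n:ℝ) + u := hmR
        _ ≤ (u^4 + u) * b := key
        _ = u * ((u^3+1)*b) := by ring
    exact le_of_mul_le_mul_left this hupos
  have hsbm : s * b ≤ m + b := by
    have := Nat.div_mul_le_self m b
    calc s * b = (m/b)*b + b := by rw [hs]; ring
      _ ≤ m + b := by omega
  have hsR : (s:ℝ) ≤ u^3 + 2 := by
    have h1 : (s:ℝ) * b ≤ (m:ℝ) + b := by exact_mod_cast hsbm
    have h2 : (s:ℝ) * b ≤ (u^3 + 2) * b := by nlinarith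
    have hbpos' : (0:ℝ) < b := by linarith
    exact le_of_mul_le_mul_right h2 hbpos'
  have hstkR : (s:ℝ) + k ≤ (t:ℝ) := by
    rw [htR, ← hu2]; nlinarith
  have hstk : s + k ≤ t := by
    have : ((s + k : ℕ):ℝ) ≤ ((t:ℕ):ℝ) := by push_cast; exact hstkR
    exact_mod_cast this
  have hmsb : m ≤ b * s := by
    have h1 := Nat.div_add_mod m b
    have h2 : m % b < b := Nat.mod_lt m (by omega)
    calc m = b * (m/b) + m % b := (Nat.div_add_mod m b).symm
      _ ≤ b * (m/b) + b := by omega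
      _ = b * s := by rw [hs]; ring
  have hq : (t.choose s : ℝ) * ((2*((k:ℝ)+1) * Real.exp u)⁻¹) ≤ ((t - k).choose s : ℝ) :=
    q0_le_ratio k s t u hu4 hu2 htR hsR hstk
  have hL2 : (2:ℝ) ≤ Real.log k := by
    have hkposR : (0:ℝ) < (k:ℝ) := by positivity
    rw [Real.le_log_iff_exp_le hkposR]
    have h1 := Real.exp_one_lt_d9
    have h3 : Real.exp 2 = (Real.exp 1)^(2:ℕ) := by
      rw [← Real.exp_nat_mul]; norm_num
    have h4 := pow_lt_pow_left₀ h1 (Real.exp_pos 1).le (two_ne_zero)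
    rw [h3]; nlinarith
  have hE1 : (1:ℝ) ≤ Real.exp u := Real.one_le_exp hupos.le
  obtain ⟨hNq0, hNbound⟩ := N_bounds (k:ℝ) (Real.log k) (Real.exp u) hkR hL2 hE1
  set N := ⌈(2*(k:ℝ)*Real.log k + 1) * (2*((k:ℝ)+1)*Real.exp u)⌉₊ with hN
  have htk : (t.choose k : ℝ) ≤ Real.exp (2*(k:ℝ)*Real.log k) := by
    have hkposR : (0:ℝ) < (k:ℝ) := by positivity
    have h1 : (t.choose k) ≤ t^k := Nat.choose_le_pow t k
    have h2 : ((t:ℕ):ℝ) = ((k:ℝ))^2 := by rw [ht]; push_cast; ring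
    have h3 : ((t^k : ℕ):ℝ) = Real.exp (2*(k:ℝ)*Real.log k) := by
      push_cast
      rw [h2, ← pow_mul]
      rw [← Real.exp_log (pow_pos hkposR (2*k)), Real.log_pow]
      congr 1
      push_cast
      ring
    calc (t.choose k : ℝ) ≤ ((t^k : ℕ):ℝ) := by exact_mod_cast h1
      _ = _ := h3
  have hq0le1 : (2*((k:ℝ)+1) * Real.exp u)⁻¹ ≤ 1 := by
    apply inv_le_one_of_one_le₀
    nlinarith
  have hq0pos : (0:ℝ) < (2*((k:ℝ)+1) * Real.exp u)⁻¹ := by positivity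
  have hcount := count_lt k t s N ((2*((k:ℝ)+1) * Real.exp u)⁻¹) (Real.log k)
    hq0pos hq0le1 hq hstk htk hNq0
  obtain ⟨g, hgcard, hgood⟩ := exists_good_tuple t s k N hcount
  -- construction of the bisector family
  have hblkbd : ∀ x : Fin n, min (x.val / b) (t-1) < t := by
    intro x
    have := min_le_right (x.val / b) (t-1)
    omega
  set blk : Fin n → Fin t := fun x => ⟨min (x.val / b) (t-1), hblkbd x⟩ with hblk
  have hfiber : ∀ j : Fin t, b ≤ (univ.filter (fun x : Fin n => blk x = j)).card := by
    intro j
    have hbt : t * b ≤ n := by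
      rw [hb, Nat.mul_comm]
      exact Nat.div_mul_le_self n t
    have hemb : ∀ i : Fin b, j.val * b + i.val < n := by
      intro i
      have h1 : j.val + 1 ≤ t := j.isLt
      calc j.val * b + i.val < j.val * b + b := by omega
        _ = (j.val + 1) * b := by ring
        _ ≤ t * b := Nat.mul_le_mul_right b h1
        _ ≤ n := hbt
    have hblkval : ∀ i : Fin b, blk ⟨j.val * b + i.val, hemb i⟩ = j := by
      intro i
      have hdiv : (j.val * b + i.val) / b = j.val := by
        rw [Nat.mul_comm, Nat.mul_add_div (by omega)]
        simp [Nat.div_eq_of_lt i.isLt]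
      apply Fin.ext
      show min ((j.val * b + i.val) / b) (t-1) = j.val
      rw [hdiv]
      have := j.isLt
      omega
    have hinj : (univ : Finset (Fin b)).card ≤ (univ.filter (fun x : Fin n => blk x = j)).card := by
      apply Finset.card_le_card_of_injOn (fun i : Fin b => (⟨j.val * b + i.val, hemb i⟩ : Fin n))
      · intro i _
        exact mem_filter.mpr ⟨mem_univ _, hblkval i⟩
      · intro i1 _ i2 _ hEq
        rw [Fin.mk.injEq] at hEq
        apply Fin.ext
        omega
    simpa using hinj
  have hPcard : ∀ i : Fin N, m ≤ (univ.filter (fun x : Fin n => blk x ∈ g i)).card := by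
    intro i
    have hfw : (univ.filter (fun x : Fin n => blk x ∈ g i)).card
        = ∑ j ∈ g i, ((univ.filter (fun x : Fin n => blk x ∈ g i)).filter (fun x => blk x = j)).card :=
      card_eq_sum_card_fiberwise (fun x hx => (mem_filter.mp hx).2)
    have hfw2 : ∀ j ∈ g i, b ≤ ((univ.filter (fun x : Fin n => blk x ∈ g i)).filter (fun x => blk x = j)).card := by
      intro j hj
      refine le_trans (hfiber j) (card_le_card ?_)
      intro x hx
      rw [mem_filter] at hx
      rw [mem_filter, mem_filter]
      exact ⟨⟨hx.1, hx.2 ▸ hj⟩, hx.2⟩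
    calc m ≤ b * s := hmsb
      _ = (g i).card * b := by rw [hgcard i]; ring
      _ ≤ ∑ j ∈ g i, ((univ.filter (fun x : Fin n => blk x ∈ g i)).filter (fun x => blk x = j)).card := by
          have := Finset.card_nsmul_le_sum (g i) _ b hfw2
          simpa using this
      _ = _ := hfw.symm
  choose O hOsub hOcard using fun i : Fin N => Finset.exists_subset_card_eq (hPcard i)
  set fF : Fin N → (Fin n → Fin 2) := fun i x => if x ∈ O i then 1 else 0 with hfF
  refine ⟨Finset.image fF univ, ⟨?_, ?_⟩, ?_⟩
  · intro f hf
    obtain ⟨i, _, rfl⟩ := mem_image.mp hf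
    have hOf : (Finset.univ.filter fun x => fF i x = 1) = O i := by
      ext x
      simp only [mem_filter, mem_univ, true_and, hfF]
      by_cases hx : x ∈ O i
      · simp [hx]
      · simp [hx]
    rw [hOf, hOcard i]
    exact hm
  · intro S hS
    have hTsub : S.image blk ⊆ univ := subset_univ _
    have hTle : (S.image blk).card ≤ k := le_trans card_image_le hS.le
    have hkt : k ≤ (univ : Finset (Fin t)).card := by
      rw [card_univ, Fintype.card_fin, ht]
      nlinarith
    obtain ⟨T, hT1, hT2, hT3⟩ := exists_subsuperset_card_eq hTsub hTle hkt
    obtain ⟨i, hdisj⟩ := hgood T (mem_powersetCard.mpr ⟨hT2, hT3⟩)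
    refine ⟨fF i, mem_image_of_mem _ (mem_univ i), fun x hx => ?_⟩
    have hxO : x ∉ O i := by
      intro hxO
      have h1 : blk x ∈ g i := (mem_filter.mp (hOsub i hxO)).2
      have h2 : blk x ∈ T := hT1 (mem_image_of_mem blk hx)
      exact (disjoint_left.mp hdisj h1) h2
    simp [hfF, hxO]
  · have h1 : (Finset.image fF univ).card ≤ N := le_trans card_image_le (by simp)
    have h2 : ((Finset.image fF univ).card : ℝ) ≤ (N:ℝ) := by exact_mod_cast h1
    exact le_trans h2 hNbound
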